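/- Fix c>0. Then: (i) the function x ↦ δ−(αδ−λ)x²+cα(δ(2x−c)−1) has a unique root x_v(c) in (−∞, f₀+c); (ii) y ↦ H_r(y;c) is continuously differentiable on (0,∞); (iii) setting y_v(c)=max(y_c, Ψ(x_v(c))), one has y_v(c) ∈ [y_c, ŷ₃(c)), H_r(·;c) is strictly convex on (y_v(c),∞), and if y_v(c)>y_c then H_r(·;c) is strictly concave on (y_c, y_v(c)); (iv) H_r(y;c) → −∞ and ∂H_r/∂y(y;c) → 0 as y → ∞. -/

import Mathlib

open Set Filter Real Topology

private lemma glueIicIci {f f₁ f₂ : ℝ → ℝ} {a d : ℝ}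
    (h₁ : ∀ x ≤ a, f x = f₁ x) (h₂ : ∀ x, a ≤ x → f x = f₂ x)
    (d₁ : HasDerivAt f₁ d a) (d₂ : HasDerivAt f₂ d a) : HasDerivAt f d a := by
  have e₁ : HasDerivWithinAt f d (Iic a) a :=
    (d₁.hasDerivWithinAt).congr (fun x hx => h₁ x hx) (h₁ a le_rfl)
  have e₂ : HasDerivWithinAt f d (Ici a) a :=
    (d₂.hasDerivWithinAt).congr (fun x hx => h₂ x hx) (h₂ a le_rfl)
  have := e₁.union e₂
  rw [Set.Iic_union_Ici] at this
  exact hasDerivWithinAt_univ.mp this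

set_option maxHeartbeats 8000000 in
theorem stmt_6 (α δ lam : ℝ) (hα : 0 < α) (hδ : 0 < δ) (hlam : 0 < lam)
    (hltd : lam < α * δ)
    (f₀ : ℝ)
    (hf₀ : f₀ = (1 / Real.sqrt (2 * α)) * (Real.sqrt ((α * δ + lam) / (α * δ - lam)) - 1))
    (hf₀big : α / (2 * lam) < f₀)
    (Ψ : ℝ → ℝ) (hΨ : ∀ x, Ψ x = Real.exp (2 * Real.sqrt (2 * α) * x))
    (B₀ : ℝ)
    (hB₀ : B₀ = -(2 * f₀ / (α * Real.sqrt (2 * α))) * (α * δ - lam) *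
      Real.exp (f₀ * Real.sqrt (2 * α)))
    (c : ℝ) (hc : 0 < c)
    (hr1 hr2 hr : ℝ → ℝ)
    (hhr1 : ∀ x, hr1 x = δ * c * (c - 2 * x) + (δ - lam / α) * x ^ 2 + c - lam / α ^ 2)
    (hhr2 : ∀ x, hr2 x = (lam / α) * c * (c - 2 * x) + c +
      B₀ * Real.exp (-(x - c) * Real.sqrt (2 * α)))
    (hhra : ∀ x, x ≤ f₀ + c → hr x = hr1 x)
    (hhrb : ∀ x, f₀ + c ≤ x → hr x = hr2 x)
    (Hr : ℝ → ℝ)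
    (hHr : ∀ y, 0 < y → Hr y = Real.sqrt y * hr (Real.log y / (2 * Real.sqrt (2 * α)))) :
    -- (i) unique root x_v(c) in (−∞, f₀+c)
    (∃! xv : ℝ, xv < f₀ + c ∧
      δ - (α * δ - lam) * xv ^ 2 + c * α * (δ * (2 * xv - c) - 1) = 0) ∧
    -- (ii) H_r(·;c) is continuously differentiable on (0,∞)
    ContDiffOn ℝ 1 Hr (Set.Ioi 0) ∧
    -- (iii) convexity/concavity split at y_v(c) = max(y_c, Ψ(x_v(c)))
    (∀ xv : ℝ, xv < f₀ + c →
      δ - (α * δ - lam) * xv ^ 2 + c * α * (δ * (2 * xv - c) - 1) = 0 →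
      Ψ (1 / (2 * δ) + c / 2) ≤ max (Ψ (1 / (2 * δ) + c / 2)) (Ψ xv) ∧
      max (Ψ (1 / (2 * δ) + c / 2)) (Ψ xv) < Ψ (f₀ + c) ∧
      StrictConvexOn ℝ (Set.Ioi (max (Ψ (1 / (2 * δ) + c / 2)) (Ψ xv))) Hr ∧
      (Ψ (1 / (2 * δ) + c / 2) < max (Ψ (1 / (2 * δ) + c / 2)) (Ψ xv) →
        StrictConcaveOn ℝ
          (Set.Ioo (Ψ (1 / (2 * δ) + c / 2)) (max (Ψ (1 / (2 * δ) + c / 2)) (Ψ xv))) Hr)) ∧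
    -- (iv) limits at infinity
    Filter.Tendsto Hr Filter.atTop Filter.atBot ∧
    Filter.Tendsto (deriv Hr) Filter.atTop (nhds 0) := by
  set k := Real.sqrt (2 * α) with hkdef
  have h2α : (0:ℝ) < 2 * α := by linarith
  have hk0 : 0 < k := Real.sqrt_pos.mpr h2α
  have hk2 : k ^ 2 = 2 * α := Real.sq_sqrt h2α.le
  have ha : 0 < α * δ - lam := by linarith
  have hf₀pos : 0 < f₀ := lt_trans (by positivity) hf₀big
  have h2lf : α < 2 * lam * f₀ := by
    have := (div_lt_iff₀ (by positivity : (0:ℝ) < 2 * lam)).mp hf₀big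
    linarith
  -- the key algebraic relation for f₀
  have hstar : α * (α * δ - lam) * f₀ ^ 2 + (α * δ - lam) * k * f₀ = lam := by
    have hba : (0:ℝ) ≤ (α * δ + lam) / (α * δ - lam) := by positivity
    have h1 : k * f₀ = Real.sqrt ((α * δ + lam) / (α * δ - lam)) - 1 := by
      rw [hf₀, one_div, ← mul_assoc, mul_inv_cancel₀ hk0.ne', one_mul]
    have h2 : (k * f₀ + 1) ^ 2 = (α * δ + lam) / (α * δ - lam) := by
      rw [h1]; simpa using Real.sq_sqrt hba
    have h3 : (α * δ - lam) * (k * f₀ + 1) ^ 2 = α * δ + lam := by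
      rw [h2]; field_simp
    linear_combination h3 / 2 - (α * δ - lam) * f₀ ^ 2 / 2 * hk2
  have hE : B₀ * Real.exp (-(f₀ * k)) = -(2 * f₀ / (α * k)) * (α * δ - lam) := by
    calc B₀ * Real.exp (-(f₀ * k))
        = -(2 * f₀ / (α * k)) * (α * δ - lam) * (Real.exp (f₀ * k) * Real.exp (-(f₀ * k))) := by
          rw [hB₀]; ring
      _ = -(2 * f₀ / (α * k)) * (α * δ - lam) := by
          rw [← Real.exp_add, add_neg_cancel, Real.exp_zero, mul_one]
  -- junction point
  have hexp_xs : Real.exp (-(f₀ + c - c) * k) = Real.exp (-(f₀ * k)) := by ring_nf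
  have M1 : hr1 (f₀ + c) = hr2 (f₀ + c) := by
    rw [hhr1, hhr2, hexp_xs, hE]
    field_simp
    linear_combination k * hstar - (α * δ - lam) * f₀ * hk2
  -- piecewise derivatives
  set h1d : ℝ → ℝ := fun x => 2 * (δ - lam / α) * x - 2 * δ * c with h1ddef
  set h2d : ℝ → ℝ := fun x => -(2 * (lam / α) * c) - k * (B₀ * Real.exp (-(x - c) * k))
    with h2ddef
  have M2 : h1d (f₀ + c) = h2d (f₀ + c) := by
    simp only [h1ddef, h2ddef, hexp_xs, hE]
    field_simp
    ring
  have hr1e : hr1 = fun x => δ * c * (c - 2 * x) + (δ - lam / α) * x ^ 2 + c - lam / α ^ 2 :=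
    funext hhr1
  have hr2e : hr2 = fun x => (lam / α) * c * (c - 2 * x) + c + B₀ * Real.exp (-(x - c) * k) :=
    funext hhr2
  have hlin : ∀ x : ℝ, HasDerivAt (fun x : ℝ => c - 2 * x) (-2) x := by
    intro x
    exact ((hasDerivAt_const x c).sub ((hasDerivAt_id x).const_mul 2)).congr_deriv (by norm_num)
  have Dhr1 : ∀ x, HasDerivAt hr1 (h1d x) x := by
    intro x
    rw [hr1e]
    have h2 : HasDerivAt (fun x : ℝ => x ^ 2) (2 * x) x := by simpa using hasDerivAt_pow 2 x
    have := ((((hlin x).const_mul (δ * c)).add (h2.const_mul (δ - lam / α))).add_const c).sub_const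
      (lam / α ^ 2)
    refine this.congr_deriv (Eq.symm ?_)
    simp only [h1ddef]; ring
  have Dexp2 : ∀ x : ℝ, HasDerivAt (fun x : ℝ => Real.exp (-(x - c) * k))
      (-k * Real.exp (-(x - c) * k)) x := by
    intro x
    have h : HasDerivAt (fun x : ℝ => -(x - c) * k) (-k) x := by
      simpa using (((hasDerivAt_id x).sub_const c).neg.mul_const k)
    simpa [mul_comm] using h.exp
  have Dhr2 : ∀ x, HasDerivAt hr2 (h2d x) x := by
    intro x
    rw [hr2e]
    have := (((hlin x).const_mul ((lam / α) * c)).add_const c).add ((Dexp2 x).const_mul B₀)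
    refine this.congr_deriv (Eq.symm ?_)
    simp only [h2ddef]; ring
  set hd : ℝ → ℝ := fun x => if x ≤ f₀ + c then h1d x else h2d x with hddef
  have Dhr : ∀ x, HasDerivAt hr (hd x) x := by
    intro x
    rcases lt_trichotomy x (f₀ + c) with h | h | h
    · rw [show hd x = h1d x from if_pos h.le]
      refine (Dhr1 x).congr_of_eventuallyEq ?_
      filter_upwards [Iio_mem_nhds h] with z hz
      exact hhra z (le_of_lt hz)
    · rw [h, show hd (f₀ + c) = h1d (f₀ + c) from if_pos le_rfl]
      exact glueIicIci (fun z hz => hhra z hz) (fun z hz => hhrb z hz) (Dhr1 _) (M2 ▸ Dhr2 _)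
    · rw [show hd x = h2d x from if_neg (not_le.mpr h)]
      refine (Dhr2 x).congr_of_eventuallyEq ?_
      filter_upwards [Ioi_mem_nhds h] with z hz
      exact hhrb z (le_of_lt hz)
  set q : ℝ → ℝ := fun x => Real.exp (-(k * x)) * (k * hr x + hd x) / (2 * k) with hqdef
  have DG : ∀ x, HasDerivAt (fun x => Real.exp (k * x) * hr x)
      (Real.exp (k * x) * (k * hr x + hd x)) x := by
    intro x
    have he : HasDerivAt (fun x : ℝ => Real.exp (k * x)) (k * Real.exp (k * x)) x := by
      simpa [mul_comm] using ((hasDerivAt_id x).const_mul k).exp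
    have := he.mul (Dhr x)
    refine this.congr_deriv (Eq.symm ?_); ring
  have sqrt_exp : ∀ y : ℝ, 0 < y → Real.exp (k * (Real.log y / (2 * k))) = Real.sqrt y := by
    intro y hy
    have h1 : k * (Real.log y / (2 * k)) = Real.log y / 2 := by field_simp
    have h2 : Real.exp (Real.log y / 2) ^ 2 = y := by
      rw [sq, ← Real.exp_add, show Real.log y / 2 + Real.log y / 2 = Real.log y by ring,
        Real.exp_log hy]
    rw [h1]
    conv_rhs => rw [← h2]
    rw [Real.sqrt_sq (Real.exp_nonneg _)]
  have DHrq : ∀ y : ℝ, 0 < y → HasDerivAt Hr (q (Real.log y / (2 * k))) y := by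
    intro y hy
    have hL : HasDerivAt (fun z : ℝ => Real.log z / (2 * k)) (y⁻¹ / (2 * k)) y :=
      (Real.hasDerivAt_log hy.ne').div_const (2 * k)
    have hcomp := (DG (Real.log y / (2 * k))).comp y hL
    have heq : Hr =ᶠ[𝓝 y]
        fun z => Real.exp (k * (Real.log z / (2 * k))) * hr (Real.log z / (2 * k)) := by
      filter_upwards [Ioi_mem_nhds hy] with z hz
      rw [hHr z hz, sqrt_exp z hz]
    have hcomp' : HasDerivAt Hr
        (Real.exp (k * (Real.log y / (2 * k))) * (k * hr (Real.log y / (2 * k)) +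
          hd (Real.log y / (2 * k))) * (y⁻¹ / (2 * k))) y := by
      refine HasDerivAt.congr_of_eventuallyEq ?_ heq
      exact hcomp
    have hS := sqrt_exp y hy
    have hy2 : Real.sqrt y ^ 2 = y := Real.sq_sqrt hy.le
    have hS0 : (0:ℝ) < Real.sqrt y := Real.sqrt_pos.mpr hy
    set Lx := Real.log y / (2 * k) with hLx
    have hval : q Lx = Real.exp (k * Lx) * (k * hr Lx + hd Lx) * (y⁻¹ / (2 * k)) := by
      simp only [hqdef]
      rw [Real.exp_neg, hS, ← hy2]
      field_simp
      rw [Real.sqrt_sq hS0.le]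
    rw [hval]
    exact hcomp'
  have dHr_eq : ∀ y : ℝ, 0 < y → deriv Hr y = q (Real.log y / (2 * k)) :=
    fun y hy => (DHrq y hy).deriv
  have cont_hr1 : Continuous hr1 := by rw [hr1e]; fun_prop
  have cont_hr2 : Continuous hr2 := by rw [hr2e]; fun_prop
  have cont_h1d : Continuous h1d := by rw [h1ddef]; fun_prop
  have cont_h2d : Continuous h2d := by rw [h2ddef]; fun_prop
  have hre : hr = fun x => if x ≤ f₀ + c then hr1 x else hr2 x := by
    funext x
    by_cases h : x ≤ f₀ + c
    · rw [if_pos h]; exact hhra x h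
    · rw [if_neg h]; exact hhrb x (le_of_not_ge h)
  have cont_hr : Continuous hr := by
    rw [hre]
    exact Continuous.if_le cont_hr1 cont_hr2 continuous_id continuous_const
      (fun x hx => by rw [hx]; exact M1)
  have cont_hd : Continuous hd := by
    rw [hddef]
    exact Continuous.if_le cont_h1d cont_h2d continuous_id continuous_const
      (fun x hx => by rw [hx]; exact M2)
  have cont_q : Continuous q := by
    rw [hqdef]
    exact ((Real.continuous_exp.comp (continuous_const.mul continuous_id).neg).mul
      ((continuous_const.mul cont_hr).add cont_hd)).div_const _
  have contL : ContinuousOn (fun y : ℝ => Real.log y / (2 * k)) (Ioi 0) :=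
    (Real.continuousOn_log.mono
      (fun y hy => Set.mem_compl_singleton_iff.mpr (ne_of_gt hy))).div_const _
  have cont_derivHr : ContinuousOn (deriv Hr) (Ioi 0) := by
    refine ContinuousOn.congr (cont_q.comp_continuousOn contL) ?_
    intro y hy; exact dHr_eq y hy
  have contHr : ContinuousOn Hr (Ioi 0) :=
    fun y hy => (DHrq y hy).continuousAt.continuousWithinAt
  have part2 : ContDiffOn ℝ 1 Hr (Ioi 0) := by
    rw [show (1 : WithTop ℕ∞) = 0 + 1 by norm_num]
    refine (contDiffOn_succ_iff_deriv_of_isOpen isOpen_Ioi).mpr ⟨?_, by simp, ?_⟩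
    · exact fun y hy => (DHrq y hy).differentiableAt.differentiableWithinAt
    · exact contDiffOn_zero.mpr cont_derivHr
  -- PART (i) : the root xv0
  set s := Real.sqrt ((α*δ*c)^2 + (α*δ - lam)*(δ - α*δ*c^2 - α*c)) with hsdef
  have gstar : 0 < δ - (α*δ - lam)*(f₀+c)^2 + c*α*(δ*(2*(f₀+c) - c) - 1) := by
    nlinarith [hstar, mul_pos hα hc, mul_pos (mul_pos hα hc) (sub_pos.mpr h2lf),
      mul_pos (mul_pos ha hk0) hf₀pos, mul_pos (mul_pos hα hlam) (mul_pos hc hc), ha]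
  have hD : (α*δ*c - (α*δ-lam)*(f₀+c))^2 < (α*δ*c)^2 + (α*δ-lam)*(δ - α*δ*c^2 - α*c) := by
    have expand : (α*δ*c)^2 + (α*δ-lam)*(δ - α*δ*c^2 - α*c)
        - (α*δ*c - (α*δ-lam)*(f₀+c))^2
        = (α*δ-lam)*(δ - (α*δ-lam)*(f₀+c)^2 + c*α*(δ*(2*(f₀+c)-c)-1)) := by ring
    linarith [mul_pos ha gstar, expand]
  have hDpos : (0:ℝ) ≤ (α*δ*c)^2 + (α*δ-lam)*(δ - α*δ*c^2 - α*c) :=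
    le_trans (sq_nonneg _) hD.le
  have hs2 : s^2 = (α*δ*c)^2 + (α*δ-lam)*(δ - α*δ*c^2 - α*c) := Real.sq_sqrt hDpos
  have hs0 : 0 ≤ s := Real.sqrt_nonneg _
  clear_value s
  have hsgt1 : (α*δ-lam)*(f₀+c) - α*δ*c < s := by nlinarith [hs2, hD, hs0]
  have hsgt2 : α*δ*c - (α*δ-lam)*(f₀+c) < s := by nlinarith [hs2, hD, hs0]
  set xv0 := (α*δ*c - s)/(α*δ - lam) with hxv0def
  clear_value xv0
  have hxa : (α*δ-lam) * xv0 = α*δ*c - s := by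
    rw [hxv0def]; field_simp
  have hxv0lt : xv0 < f₀ + c := by
    have h' : (α*δ-lam)*xv0 < (α*δ-lam)*(f₀+c) := by linarith [hxa, hsgt2]
    exact lt_of_mul_lt_mul_left h' ha.le
  have hgxv0 : δ - (α*δ-lam)*xv0^2 + c*α*(δ*(2*xv0-c)-1) = 0 := by
    have e1 : (α*δ-lam)^2 * (δ - (α*δ-lam)*xv0^2 + c*α*(δ*(2*xv0-c)-1))
        = (α*δ-lam) * (((α*δ*c)^2 + (α*δ-lam)*(δ - α*δ*c^2 - α*c)) - s^2) := by
      linear_combination ((α*δ-lam)*(α*δ*c + s) - (α*δ-lam)^2*xv0) * hxa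
    rw [hs2] at e1
    simp only [sub_self, mul_zero] at e1
    exact (mul_eq_zero.mp e1).resolve_left (pow_ne_zero 2 ha.ne')
  have huniq : ∀ x', x' < f₀ + c →
      δ - (α*δ-lam)*x'^2 + c*α*(δ*(2*x'-c)-1) = 0 → x' = xv0 := by
    intro x' hlt heq
    have key : ((α*δ-lam)*x' - α*δ*c - s) * ((α*δ-lam)*x' - α*δ*c + s) = 0 := by
      linear_combination (-(α*δ-lam)) * heq - hs2
    rcases mul_eq_zero.mp key with h | h
    · exfalso
      nlinarith [hsgt1, mul_lt_mul_of_pos_left hlt ha]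
    · have : (α*δ-lam) * x' = (α*δ-lam) * xv0 := by rw [hxa]; linarith
      exact mul_left_cancel₀ ha.ne' this
  have part1 : ∃! xv : ℝ, xv < f₀ + c ∧
      δ - (α * δ - lam) * xv ^ 2 + c * α * (δ * (2 * xv - c) - 1) = 0 :=
    ⟨xv0, ⟨hxv0lt, hgxv0⟩, fun y hy => huniq y hy.1 hy.2⟩
  have gpos : ∀ x, xv0 < x → x < f₀ + c →
      0 < δ - (α*δ-lam)*x^2 + c*α*(δ*(2*x-c)-1) := by
    intro x h1 h2
    have p1 : 0 < α*δ*c + s - (α*δ-lam)*x := by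
      have := mul_lt_mul_of_pos_left h2 ha
      linarith [hsgt1]
    have p2 : 0 < (α*δ-lam)*x - (α*δ*c - s) := by
      have := mul_lt_mul_of_pos_left h1 ha
      linarith [hxa]
    have expand2 : (α*δ-lam)*(δ - (α*δ-lam)*x^2 + c*α*(δ*(2*x-c)-1))
        = (α*δ*c + s - (α*δ-lam)*x)*((α*δ-lam)*x - (α*δ*c - s))
          - (s^2 - ((α*δ*c)^2 + (α*δ-lam)*(δ - α*δ*c^2 - α*c))) := by ring
    have haG : 0 < (α*δ-lam)*(δ - (α*δ-lam)*x^2 + c*α*(δ*(2*x-c)-1)) := by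
      rw [expand2]
      have := mul_pos p1 p2
      linarith [hs2]
    by_contra hcon
    push_neg at hcon
    have : (α*δ-lam)*(δ - (α*δ-lam)*x^2 + c*α*(δ*(2*x-c)-1)) ≤ 0 :=
      mul_nonpos_of_nonneg_of_nonpos ha.le hcon
    linarith
  have gneg : ∀ x, x < xv0 →
      δ - (α*δ-lam)*x^2 + c*α*(δ*(2*x-c)-1) < 0 := by
    intro x h1
    have p1 : 0 < α*δ*c - s - (α*δ-lam)*x := by
      have := mul_lt_mul_of_pos_left h1 ha
      linarith [hxa]
    have p2 : 0 < α*δ*c + s - (α*δ-lam)*x := by linarith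
    have expand2 : (α*δ-lam)*(δ - (α*δ-lam)*x^2 + c*α*(δ*(2*x-c)-1))
        = -((α*δ*c - s - (α*δ-lam)*x)*(α*δ*c + s - (α*δ-lam)*x))
          - (s^2 - ((α*δ*c)^2 + (α*δ-lam)*(δ - α*δ*c^2 - α*c))) := by ring
    have haG : (α*δ-lam)*(δ - (α*δ-lam)*x^2 + c*α*(δ*(2*x-c)-1)) < 0 := by
      rw [expand2]
      have := mul_pos p1 p2
      linarith [hs2]
    by_contra hcon
    push_neg at hcon
    have : 0 ≤ (α*δ-lam)*(δ - (α*δ-lam)*x^2 + c*α*(δ*(2*x-c)-1)) :=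
      mul_nonneg ha.le hcon
    linarith
  -- derivatives of q on each region
  set q1 : ℝ → ℝ := fun x => Real.exp (-(k*x)) * (k * hr1 x + h1d x) / (2*k) with hq1def
  set q2 : ℝ → ℝ := fun x => Real.exp (-(k*x)) * (k * hr2 x + h2d x) / (2*k) with hq2def
  have Dexpneg : ∀ x : ℝ, HasDerivAt (fun x : ℝ => Real.exp (-(k*x)))
      (-k * Real.exp (-(k*x))) x := by
    intro x
    have h : HasDerivAt (fun x : ℝ => -(k*x)) (-k) x := by
      exact ((hasDerivAt_id x).const_mul k).neg.congr_deriv (by simp)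
    simpa [mul_comm] using h.exp
  have Dh1d : ∀ x : ℝ, HasDerivAt h1d (2*(δ - lam/α)) x := by
    intro x
    rw [h1ddef]
    simpa using ((hasDerivAt_id x).const_mul (2*(δ - lam/α))).sub_const (2*δ*c)
  have Dh2d : ∀ x : ℝ, HasDerivAt h2d (k*k*(B₀ * Real.exp (-(x-c)*k))) x := by
    intro x
    rw [h2ddef]
    have := (hasDerivAt_const x (-(2*(lam/α)*c))).sub (((Dexp2 x).const_mul B₀).const_mul k)
    refine this.congr_deriv (Eq.symm ?_)
    ring
  have Dq1 : ∀ x : ℝ, HasDerivAt q1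
      (Real.exp (-(k*x)) * (δ - (α*δ-lam)*x^2 + c*α*(δ*(2*x-c)-1)) / k) x := by
    intro x
    have hin : HasDerivAt (fun y => k * hr1 y + h1d y) (k * h1d x + 2*(δ - lam/α)) x :=
      ((Dhr1 x).const_mul k).add (Dh1d x)
    have hmain := ((Dexpneg x).mul hin).div_const (2*k)
    rw [hq1def]
    refine hmain.congr_deriv (Eq.symm ?_)
    rw [hhr1 x]
    simp only [h1ddef]
    field_simp
    linear_combination (α*(δ*α*c*(c-x*2) + x^2*(δ*α-lam) + α*c) - lam) * hk2
  have Dq2 : ∀ x : ℝ, HasDerivAt q2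
      (Real.exp (-(k*x)) * (c*(2*lam*x - lam*c - α)) / k) x := by
    intro x
    have hin : HasDerivAt (fun y => k * hr2 y + h2d y)
        (k * h2d x + k*k*(B₀ * Real.exp (-(x-c)*k))) x :=
      ((Dhr2 x).const_mul k).add (Dh2d x)
    have hmain := ((Dexpneg x).mul hin).div_const (2*k)
    rw [hq2def]
    refine hmain.congr_deriv (Eq.symm ?_)
    rw [hhr2 x]
    simp only [h2ddef]
    field_simp
    linear_combination (c*(lam*(c-x*2)+α)) * hk2
  have hd_eq1 : ∀ x, x ≤ f₀ + c → hd x = h1d x := by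
    intro x hx
    simp only [hddef]
    rw [if_pos hx]
  have hd_eq2 : ∀ x, f₀ + c ≤ x → hd x = h2d x := by
    intro x hx
    rcases eq_or_lt_of_le hx with h | h
    · simp only [hddef]
      rw [if_pos h.ge, ← h]
      exact M2
    · simp only [hddef]
      rw [if_neg (not_le.mpr h)]
  have q_eq1 : ∀ x, x ≤ f₀ + c → q x = q1 x := by
    intro x hx
    simp only [hqdef, hq1def]
    rw [hhra x hx, hd_eq1 x hx]
  have q_eq2 : ∀ x, f₀ + c ≤ x → q x = q2 x := by
    intro x hx
    simp only [hqdef, hq2def]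
    rw [hhrb x hx, hd_eq2 x hx]
  have Dq_lt : ∀ x : ℝ, x < f₀ + c → HasDerivAt q
      (Real.exp (-(k*x)) * (δ - (α*δ-lam)*x^2 + c*α*(δ*(2*x-c)-1)) / k) x := by
    intro x hx
    refine (Dq1 x).congr_of_eventuallyEq ?_
    filter_upwards [Iio_mem_nhds hx] with z hz
    exact q_eq1 z (le_of_lt hz)
  have Dq_gt : ∀ x : ℝ, f₀ + c < x → HasDerivAt q
      (Real.exp (-(k*x)) * (c*(2*lam*x - lam*c - α)) / k) x := by
    intro x hx
    refine (Dq2 x).congr_of_eventuallyEq ?_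
    filter_upwards [Ioi_mem_nhds hx] with z hz
    exact q_eq2 z (le_of_lt hz)
  set xm := max (1/(2*δ) + c/2) xv0 with hxmdef
  have hxc_lt : 1/(2*δ) + c/2 < f₀ + c := by
    have h1 : 1/(2*δ) < α/(2*lam) := by
      rw [div_lt_div_iff₀ (by positivity) (by positivity)]
      linarith
    linarith [h1, hf₀big, hc]
  have hxm_lt : xm < f₀ + c := max_lt hxc_lt hxv0lt
  have mono1 : StrictMonoOn q (Ioc xm (f₀ + c)) := by
    refine strictMonoOn_of_deriv_pos (convex_Ioc _ _) (cont_q.continuousOn) ?_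
    rw [interior_Ioc]
    intro x hx
    rw [(Dq_lt x hx.2).deriv]
    have hg := gpos x (lt_of_le_of_lt (le_max_right _ _) hx.1) hx.2
    exact div_pos (mul_pos (Real.exp_pos _) hg) hk0
  have mono2 : StrictMonoOn q (Ici (f₀ + c)) := by
    refine strictMonoOn_of_deriv_pos (convex_Ici _) (cont_q.continuousOn) ?_
    rw [interior_Ici]
    intro x hx
    rw [(Dq_gt x hx).deriv]
    have hpos : 0 < c*(2*lam*x - lam*c - α) := by
      have := mul_lt_mul_of_pos_left (show f₀ + c < x from hx) hlam
      nlinarith [h2lf, mul_pos hlam hc]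
    exact div_pos (mul_pos (Real.exp_pos _) hpos) hk0
  have monoq : StrictMonoOn q (Ioi xm) := by
    intro x1 h1 x2 h2 h12
    rcases le_or_gt x2 (f₀ + c) with hle | hgt
    · exact mono1 ⟨h1, le_of_lt (lt_of_lt_of_le h12 hle)⟩ ⟨h2, hle⟩ h12
    · rcases le_or_gt x1 (f₀ + c) with hle1 | hgt1
      · have e1 : q x1 ≤ q (f₀ + c) := by
          rcases eq_or_lt_of_le hle1 with h | h
          · rw [h]
          · exact le_of_lt (mono1 ⟨h1, hle1⟩ ⟨hxm_lt, le_rfl⟩ h)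
        have e2 : q (f₀ + c) < q x2 := mono2 Set.self_mem_Ici (le_of_lt hgt) hgt
        exact lt_of_le_of_lt e1 e2
      · exact mono2 (le_of_lt hgt1) (le_of_lt hgt) h12
  have anti1 : StrictAntiOn q (Ioo (1/(2*δ) + c/2) xv0) := by
    refine strictAntiOn_of_deriv_neg (convex_Ioo _ _) (cont_q.continuousOn) ?_
    rw [interior_Ioo]
    intro x hx
    rw [(Dq_lt x (lt_trans hx.2 hxv0lt)).deriv]
    have hg := gneg x hx.2
    exact div_neg_of_neg_of_pos (mul_neg_of_pos_of_neg (Real.exp_pos _) hg) hk0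
  -- transfer to the y variable
  have Ψmono : StrictMono Ψ := by
    intro x y hxy
    rw [hΨ, hΨ]
    exact Real.exp_lt_exp.mpr (by nlinarith [hk0])
  have Ψpos : ∀ x, 0 < Ψ x := fun x => by rw [hΨ]; positivity
  have h2k : (0:ℝ) < 2*k := by linarith [hk0]
  have Lge : ∀ a y : ℝ, Ψ a ≤ y → a ≤ Real.log y / (2*k) := by
    intro a y hy
    have := Real.log_le_log (Ψpos a) hy
    rw [hΨ, Real.log_exp] at this
    rw [le_div_iff₀ h2k]
    linarith
  have Lgt : ∀ a y : ℝ, Ψ a < y → a < Real.log y / (2*k) := by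
    intro a y hy
    have := Real.log_lt_log (Ψpos a) hy
    rw [hΨ, Real.log_exp] at this
    rw [lt_div_iff₀ h2k]
    linarith
  have Llt : ∀ a y : ℝ, 0 < y → y < Ψ a → Real.log y / (2*k) < a := by
    intro a y h0 hy
    have := Real.log_lt_log h0 hy
    rw [hΨ, Real.log_exp] at this
    rw [div_lt_iff₀ h2k]
    linarith
  have Lltmono : ∀ y1 y2 : ℝ, 0 < y1 → y1 < y2 →
      Real.log y1/(2*k) < Real.log y2/(2*k) := by
    intro y1 y2 h0 h12
    have := Real.log_lt_log h0 h12
    rw [div_lt_div_iff₀ h2k h2k]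
    nlinarith [h2k]
  have part3 : ∀ xv : ℝ, xv < f₀ + c →
      δ - (α * δ - lam) * xv ^ 2 + c * α * (δ * (2 * xv - c) - 1) = 0 →
      Ψ (1 / (2 * δ) + c / 2) ≤ max (Ψ (1 / (2 * δ) + c / 2)) (Ψ xv) ∧
      max (Ψ (1 / (2 * δ) + c / 2)) (Ψ xv) < Ψ (f₀ + c) ∧
      StrictConvexOn ℝ (Set.Ioi (max (Ψ (1 / (2 * δ) + c / 2)) (Ψ xv))) Hr ∧
      (Ψ (1 / (2 * δ) + c / 2) < max (Ψ (1 / (2 * δ) + c / 2)) (Ψ xv) →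
        StrictConcaveOn ℝ
          (Set.Ioo (Ψ (1 / (2 * δ) + c / 2)) (max (Ψ (1 / (2 * δ) + c / 2)) (Ψ xv))) Hr) := by
    intro xv hxvlt hxveq
    have hxv : xv = xv0 := huniq xv hxvlt hxveq
    subst hxv
    have hmax : max (Ψ (1 / (2 * δ) + c / 2)) (Ψ xv) = Ψ xm := by
      rw [hxmdef]
      exact (Ψmono.monotone.map_max).symm
    have hyv_pos : 0 < Ψ xm := Ψpos xm
    refine ⟨le_max_left _ _, ?_, ?_, ?_⟩
    · rw [hmax]
      exact Ψmono hxm_lt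
    · rw [hmax]
      have SM : StrictMonoOn (deriv Hr) (interior (Set.Ioi (Ψ xm))) := by
        rw [interior_Ioi]
        intro y1 hy1 y2 hy2 h12
        have h01 : 0 < y1 := lt_trans hyv_pos hy1
        have h02 : 0 < y2 := lt_trans hyv_pos hy2
        rw [dHr_eq y1 h01, dHr_eq y2 h02]
        exact monoq (Lgt xm y1 hy1) (Lgt xm y2 hy2) (Lltmono y1 y2 h01 h12)
      exact StrictMonoOn.strictConvexOn_of_deriv (convex_Ioi _)
        (contHr.mono (fun y hy => lt_trans hyv_pos hy)) SM
    · intro hlt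
      rw [hmax] at hlt ⊢
      have hxcm : 1 / (2 * δ) + c / 2 < xm := by
        by_contra hcon
        push_neg at hcon
        exact absurd hlt (not_lt.mpr (Ψmono.monotone hcon))
      have hxmv : xm = xv := by
        rcases le_total xv (1/(2*δ) + c/2) with h1 | h1
        · exfalso
          rw [hxmdef, max_eq_left h1] at hxcm
          exact lt_irrefl _ hxcm
        · rw [hxmdef]
          exact max_eq_right h1
      have SA : StrictAntiOn (deriv Hr) (interior (Set.Ioo (Ψ (1/(2*δ) + c/2)) (Ψ xm))) := by
        rw [interior_Ioo]
        intro y1 hy1 y2 hy2 h12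
        have h01 : 0 < y1 := lt_trans (Ψpos _) hy1.1
        have h02 : 0 < y2 := lt_trans (Ψpos _) hy2.1
        rw [dHr_eq y1 h01, dHr_eq y2 h02]
        have m1 : Real.log y1/(2*k) ∈ Ioo (1/(2*δ) + c/2) xv :=
          ⟨Lgt _ y1 hy1.1, by rw [← hxmv]; exact Llt xm y1 h01 hy1.2⟩
        have m2 : Real.log y2/(2*k) ∈ Ioo (1/(2*δ) + c/2) xv :=
          ⟨Lgt _ y2 hy2.1, by rw [← hxmv]; exact Llt xm y2 h02 hy2.2⟩
        exact anti1 m1 m2 (Lltmono y1 y2 h01 h12)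
      exact StrictAntiOn.strictConcaveOn_of_deriv (convex_Ioo _ _)
        (contHr.mono (fun y hy => lt_trans (Ψpos _) hy.1)) SA
  -- part (iv)
  have hsqT : Tendsto Real.sqrt atTop atTop := by
    apply tendsto_atTop_atTop_of_monotone (fun a b hab => Real.sqrt_le_sqrt hab)
    intro b
    exact ⟨(max b 0)^2, by
      rw [Real.sqrt_sq (le_max_right b 0)]
      exact le_max_left b 0⟩
  have l1 : Tendsto (fun y : ℝ => Real.log y / k) atTop atTop :=
    Real.tendsto_log_atTop.atTop_div_const hk0
  have l2 : Tendsto (fun y : ℝ => c - Real.log y / k) atTop atBot := by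
    have := tendsto_atBot_add_const_left atTop c (tendsto_neg_atTop_atBot.comp l1)
    simpa [sub_eq_add_neg, Function.comp] using this
  have l3 : Tendsto (fun y : ℝ => (lam/α)*c*(c - Real.log y / k)) atTop atBot := by
    apply Tendsto.const_mul_atBot (by positivity : (0:ℝ) < (lam/α)*c) l2
  have l4 : Tendsto (fun y : ℝ => (lam/α)*c*(c - 2*(Real.log y/(2*k))) + c) atTop atBot := by
    have := tendsto_atBot_add_const_right atTop c l3
    refine this.congr ?_
    intro y
    have : 2*(Real.log y/(2*k)) = Real.log y / k := by
      field_simp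
    rw [this]
  have tendHr : Tendsto Hr atTop atBot := by
    have hbound : ∀ᶠ y in atTop, Hr y ≤ -Real.sqrt y + B₀ * Real.exp (c*k) := by
      filter_upwards [l4.eventually_le_atBot (-1), eventually_ge_atTop (max (Ψ (f₀+c)) 1)]
        with y hA hy
      have hy1 : (1:ℝ) ≤ y := le_trans (le_max_right _ _) hy
      have hy0 : (0:ℝ) < y := lt_of_lt_of_le one_pos hy1
      have hyΨ : Ψ (f₀+c) ≤ y := le_trans (le_max_left _ _) hy
      have hL : f₀ + c ≤ Real.log y / (2*k) := Lge _ _ hyΨ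
      rw [hHr y hy0, hhrb _ hL, hhr2]
      have hsp : Real.exp (-(Real.log y/(2*k) - c) * k)
          = Real.exp (-(k * (Real.log y/(2*k)))) * Real.exp (c*k) := by
        rw [← Real.exp_add]; ring_nf
      rw [hsp]
      have hse : Real.sqrt y * Real.exp (-(k * (Real.log y / (2 * k)))) = 1 := by
        rw [Real.exp_neg, sqrt_exp y hy0]
        exact mul_inv_cancel₀ (ne_of_gt (Real.sqrt_pos.mpr hy0))
      have expand : Real.sqrt y * ((lam/α)*c*(c - 2*(Real.log y/(2*k))) + c
            + B₀ * (Real.exp (-(k * (Real.log y/(2*k)))) * Real.exp (c*k)))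
          = Real.sqrt y * ((lam/α)*c*(c - 2*(Real.log y/(2*k))) + c)
            + (Real.sqrt y * Real.exp (-(k * (Real.log y/(2*k))))) * (B₀ * Real.exp (c*k)) := by
        ring
      rw [expand, hse, one_mul]
      have h1' : Real.sqrt y * ((lam/α)*c*(c - 2*(Real.log y/(2*k))) + c)
          ≤ Real.sqrt y * (-1) :=
        mul_le_mul_of_nonneg_left hA (Real.sqrt_nonneg y)
      linarith
    refine tendsto_atBot_mono' atTop hbound ?_
    exact tendsto_atBot_add_const_right _ _ (tendsto_neg_atTop_atBot.comp hsqT)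
  have tendDeriv : Tendsto (deriv Hr) atTop (𝓝 0) := by
    have hinv : Tendsto (fun y : ℝ => (Real.sqrt y)⁻¹) atTop (𝓝 0) :=
      tendsto_inv_atTop_zero.comp hsqT
    have hlog : Tendsto (fun y : ℝ => Real.log y / Real.sqrt y) atTop (𝓝 0) := by
      have h1 : Tendsto (fun t : ℝ => Real.log t / t) atTop (𝓝 0) := by
        simpa using Real.tendsto_pow_log_div_mul_add_atTop 1 0 1 one_ne_zero
      have h2 := h1.comp hsqT
      have h3 : Tendsto (fun y : ℝ => 2 * (Real.log (Real.sqrt y) / Real.sqrt y)) atTop (𝓝 0) := by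
        have := h2.const_mul (2:ℝ)
        simpa [Function.comp] using this
      refine h3.congr' ?_
      filter_upwards [eventually_gt_atTop (0:ℝ)] with y hy
      rw [Real.log_sqrt hy.le]
      ring
    have heq : (deriv Hr) =ᶠ[atTop] fun y =>
        ((k*((lam/α)*c*c + c) - 2*(lam/α)*c)/(2*k)) * (Real.sqrt y)⁻¹
          + (-((lam/α)*c)/(2*k)) * (Real.log y / Real.sqrt y) := by
      filter_upwards [eventually_ge_atTop (max (Ψ (f₀+c)) 1)] with y hy
      have hy1 : (1:ℝ) ≤ y := le_trans (le_max_right _ _) hy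
      have hy0 : (0:ℝ) < y := lt_of_lt_of_le one_pos hy1
      have hyΨ : Ψ (f₀+c) ≤ y := le_trans (le_max_left _ _) hy
      have hL : f₀ + c ≤ Real.log y / (2*k) := Lge _ _ hyΨ
      rw [dHr_eq y hy0, q_eq2 _ hL]
      simp only [hq2def, h2ddef]
      rw [hhr2]
      rw [Real.exp_neg, sqrt_exp y hy0]
      have hsne : Real.sqrt y ≠ 0 := ne_of_gt (Real.sqrt_pos.mpr hy0)
      field_simp
      ring
    rw [Filter.tendsto_congr' heq]
    have := (hinv.const_mul ((k*((lam/α)*c*c + c) - 2*(lam/α)*c)/(2*k))).add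
      (hlog.const_mul (-((lam/α)*c)/(2*k)))
    simpa using this
  exact ⟨part1, part2, part3, tendHr, tendDeriv⟩
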